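/- The ellipse E = (Aⁿ − I)^{−1} B(0, e^{−nτ}) is contained in the parallelogram with vertices ±c₁(λ_{n,2}/√(1+γ²))(1, γ) ± c₁(λ_{n,1}/√(1+β²))(1, β), where c₁ = √(1+β²)√(1+γ²)/|β − γ|, λ_{n,1} = e^{−τn}/|1 − λ₁ⁿ|, λ_{n,2} = e^{−τn}/|λ₂ⁿ − 1|. -/

import Mathlib

/-- The vector `(1, γ)` as a point of Euclidean `ℝ²`. -/
noncomputable def eigVec (γ : ℝ) : EuclideanSpace ℝ (Fin 2) :=
  (WithLp.equiv 2 (Fin 2 → ℝ)).symm ![1, γ]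

lemma abs_lin_le (c d u v : ℝ) :
    |c * u + d * v| ≤ Real.sqrt (c ^ 2 + d ^ 2) * Real.sqrt (u ^ 2 + v ^ 2) := by
  have h : (c * u + d * v) ^ 2 ≤ (c ^ 2 + d ^ 2) * (u ^ 2 + v ^ 2) := by
    nlinarith [sq_nonneg (c * v - d * u)]
  have := Real.sqrt_le_sqrt h
  rwa [Real.sqrt_sq_eq_abs, Real.sqrt_mul (by positivity)] at this

lemma pow_mulVec {A : Matrix (Fin 2) (Fin 2) ℝ} {l : ℝ} {v : Fin 2 → ℝ}
    (h : A.mulVec v = l • v) (n : ℕ) : (A ^ n).mulVec v = l ^ n • v := by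
  induction n with
  | zero => simp [Matrix.one_mulVec]
  | succ k ih =>
      rw [pow_succ, ← Matrix.mulVec_mulVec, h, Matrix.mulVec_smul, ih, smul_smul, pow_succ]
      ring_nf


/-- The ellipse `(Aⁿ - I)⁻¹ B(0, e^{-nτ})` is contained in the parallelogram
with vertices `± c₁ λ_{n,2} (1,γ)/√(1+γ²) ± c₁ λ_{n,1} (1,β)/√(1+β²)`, where
`c₁ = √(1+β²)√(1+γ²)/|β - γ|`, `λ_{n,1} = e^{-τn}/|1 - λ₁ⁿ|` and
`λ_{n,2} = e^{-τn}/|λ₂ⁿ - 1|`. -/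
theorem ellipse_subset_parallelogram
    (A : Matrix (Fin 2) (Fin 2) ℝ) (l₁ l₂ γ β : ℝ) (hne : γ ≠ β)
    (h0 : 0 < |l₁|) (h1 : |l₁| < 1) (h2 : 1 < |l₂|)
    (hγ : A.mulVec ![1, γ] = l₂ • ![1, γ])
    (hβ : A.mulVec ![1, β] = l₁ • ![1, β])
    (τ : ℝ) (hτ : 0 < τ) (n : ℕ) (hn : 1 ≤ n)
    (hinv : IsUnit (A ^ n - 1)) :
    {x : EuclideanSpace ℝ (Fin 2) |
        ‖Matrix.toEuclideanLin (A ^ n - 1) x‖ ≤ Real.exp (-(n : ℝ) * τ)}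
      ⊆ {x : EuclideanSpace ℝ (Fin 2) | ∃ t s : ℝ,
        |t| ≤ Real.sqrt (1 + β ^ 2) * Real.sqrt (1 + γ ^ 2) / |β - γ|
          * (Real.exp (-τ * n) / |l₂ ^ n - 1|) ∧
        |s| ≤ Real.sqrt (1 + β ^ 2) * Real.sqrt (1 + γ ^ 2) / |β - γ|
          * (Real.exp (-τ * n) / |1 - l₁ ^ n|) ∧
        x = (t / Real.sqrt (1 + γ ^ 2)) • eigVec γ
          + (s / Real.sqrt (1 + β ^ 2)) • eigVec β} := by

  intro x hx
  simp only [Set.mem_setOf_eq] at hx ⊢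
  have hγβ : γ - β ≠ 0 := sub_ne_zero.mpr hne
  set E := Real.exp (-(n : ℝ) * τ) with hE
  have hE' : Real.exp (-τ * n) = E := by rw [hE]; ring_nf
  set a := (x 1 - β * x 0) / (γ - β) with ha
  set b := (γ * x 0 - x 1) / (γ - β) with hb
  set c := l₂ ^ n - 1 with hc
  set d := l₁ ^ n - 1 with hd
  have hcne : c ≠ 0 := by
    have : 1 < |l₂ ^ n| := by rw [abs_pow]; exact one_lt_pow₀ h2 (by omega)
    intro h; rw [hc, sub_eq_zero] at h; rw [h] at this; simp at this
  have hdne : d ≠ 0 := by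
    have : |l₁ ^ n| < 1 := by rw [abs_pow]; exact pow_lt_one₀ (abs_nonneg _) h1 (by omega)
    intro h; rw [hd, sub_eq_zero] at h; rw [h] at this; simp at this
  have hxfun : (WithLp.equiv 2 (Fin 2 → ℝ)) x = a • ![1, γ] + b • ![1, β] := by
    funext i
    fin_cases i <;>
      · simp [ha, hb, WithLp.equiv_apply]
        field_simp
        ring
  have hy : Matrix.toEuclideanLin (A ^ n - 1) x =
      (WithLp.equiv 2 (Fin 2 → ℝ)).symm ((a * c) • ![1, γ] + (b * d) • ![1, β]) := by
    rw [Matrix.toEuclideanLin_apply, show x.ofLp = a • ![1, γ] + b • ![1, β] from hxfun,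
      WithLp.equiv_symm_apply]
    congr 1
    rw [Matrix.sub_mulVec, Matrix.mulVec_add, Matrix.mulVec_add, Matrix.mulVec_smul,
      Matrix.mulVec_smul, pow_mulVec hγ, pow_mulVec hβ, Matrix.one_mulVec]
    funext i
    fin_cases i <;> · simp [hc, hd]; try ring
  set Y0 := a * c + b * d with hY0
  set Y1 := a * c * γ + b * d * β with hY1
  have hnorm : Real.sqrt (Y0 ^ 2 + Y1 ^ 2) ≤ E := by
    have : ‖Matrix.toEuclideanLin (A ^ n - 1) x‖ = Real.sqrt (Y0 ^ 2 + Y1 ^ 2) := by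
      rw [hy, EuclideanSpace.norm_eq]
      congr 1
      rw [Fin.sum_univ_two]
      simp [Real.norm_eq_abs, sq_abs, hY0, hY1]
      try ring
    rw [this] at hx; exact hx
  have key1 : |a * c| * |γ - β| ≤ Real.sqrt (1 + β ^ 2) * E := by
    have h1' : a * c * (γ - β) = (-β) * Y0 + 1 * Y1 := by rw [hY0, hY1]; ring
    have := abs_lin_le (-β) 1 Y0 Y1
    rw [← h1'] at this
    rw [← abs_mul]
    calc |a * c * (γ - β)| ≤ Real.sqrt ((-β) ^ 2 + 1 ^ 2) * Real.sqrt (Y0 ^ 2 + Y1 ^ 2) := this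
      _ ≤ Real.sqrt (1 + β ^ 2) * E := by
          rw [show (-β) ^ 2 + 1 ^ 2 = 1 + β ^ 2 by ring]
          exact mul_le_mul_of_nonneg_left hnorm (Real.sqrt_nonneg _)
  have key2 : |b * d| * |γ - β| ≤ Real.sqrt (1 + γ ^ 2) * E := by
    have h1' : b * d * (γ - β) = γ * Y0 + (-1) * Y1 := by rw [hY0, hY1]; ring
    have := abs_lin_le γ (-1) Y0 Y1
    rw [← h1'] at this
    rw [← abs_mul]
    calc |b * d * (γ - β)| ≤ Real.sqrt (γ ^ 2 + (-1) ^ 2) * Real.sqrt (Y0 ^ 2 + Y1 ^ 2) := this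
      _ ≤ Real.sqrt (1 + γ ^ 2) * E := by
          rw [show γ ^ 2 + (-1) ^ 2 = 1 + γ ^ 2 by ring]
          exact mul_le_mul_of_nonneg_left hnorm (Real.sqrt_nonneg _)
  have hsg : (0:ℝ) < Real.sqrt (1 + γ ^ 2) := Real.sqrt_pos.mpr (by positivity)
  have hsb : (0:ℝ) < Real.sqrt (1 + β ^ 2) := Real.sqrt_pos.mpr (by positivity)
  have habs : (0:ℝ) < |γ - β| := abs_pos.mpr hγβ
  have hcabs : (0:ℝ) < |c| := abs_pos.mpr hcne
  have hdabs : (0:ℝ) < |d| := abs_pos.mpr hdne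
  rw [abs_mul] at key1 key2
  refine ⟨a * Real.sqrt (1 + γ ^ 2), b * Real.sqrt (1 + β ^ 2), ?_, ?_, ?_⟩
  · rw [abs_mul, abs_of_pos hsg, hE', abs_sub_comm β γ]
    rw [div_mul_eq_mul_div, le_div_iff₀ habs, ← mul_div_assoc, le_div_iff₀ hcabs]
    calc |a| * Real.sqrt (1 + γ ^ 2) * |γ - β| * |c|
        = Real.sqrt (1 + γ ^ 2) * (|a| * |c| * |γ - β|) := by ring
      _ ≤ Real.sqrt (1 + γ ^ 2) * (Real.sqrt (1 + β ^ 2) * E) :=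
          mul_le_mul_of_nonneg_left key1 (le_of_lt hsg)
      _ = Real.sqrt (1 + β ^ 2) * Real.sqrt (1 + γ ^ 2) * E := by ring
  · have h1d : |1 - l₁ ^ n| = |d| := by rw [hd, abs_sub_comm]
    rw [abs_mul, abs_of_pos hsb, hE', abs_sub_comm β γ, h1d]
    rw [div_mul_eq_mul_div, le_div_iff₀ habs, ← mul_div_assoc, le_div_iff₀ hdabs]
    calc |b| * Real.sqrt (1 + β ^ 2) * |γ - β| * |d|
        = Real.sqrt (1 + β ^ 2) * (|b| * |d| * |γ - β|) := by ring
      _ ≤ Real.sqrt (1 + β ^ 2) * (Real.sqrt (1 + γ ^ 2) * E) :=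
          mul_le_mul_of_nonneg_left key2 (le_of_lt hsb)
      _ = Real.sqrt (1 + β ^ 2) * Real.sqrt (1 + γ ^ 2) * E := by ring
  · have ht : a * Real.sqrt (1 + γ ^ 2) / Real.sqrt (1 + γ ^ 2) = a :=
      mul_div_cancel_right₀ a hsg.ne'
    have hs : b * Real.sqrt (1 + β ^ 2) / Real.sqrt (1 + β ^ 2) = b :=
      mul_div_cancel_right₀ b hsb.ne'
    rw [ht, hs]
    apply (WithLp.equiv 2 (Fin 2 → ℝ)).injective
    rw [hxfun]
    funext i
    fin_cases i <;> · simp [eigVec, WithLp.equiv_apply, WithLp.equiv_symm_apply]
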